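/- There exists a real number M such that for every x ∈ ℝ₊^R and every D ∈ ℝ^R with D_ij = 0 for all ij ∈ Λ₂(x), D_ij ≥ 0 for all ij ∈ Λ₁(x), and ‖D‖ ≥ M, one has L(x,D) ≥ ½‖D‖·log‖D‖, where ‖D‖ = Σ_{ij ∈ R} |D_ij|. -/

import Mathlib

open Classical Filter MeasureTheory
open scoped ENNReal

noncomputable section

/-- The M/M/1 cost `l(D‖λ,μ)` that a suitably normalized `M/M/1` queue with arrival rate
`λ` and service rate `μ` follows the drift `D`.  (Lean's conventions `Real.log 0 = 0` and
`0 * y = 0` implement the convention `0 · log 0 = 0`.) -/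
def mmCost (D lam mu : ℝ) : ℝ :=
  D * Real.log ((D + Real.sqrt (D ^ 2 + 4 * lam * mu)) / (2 * lam))
    + lam + mu - Real.sqrt (D ^ 2 + 4 * lam * mu)

/-- The relative entropy `I_p(ν‖λ)` of Poisson processes of intensities `ν` and `λ`.
(Lean's conventions `x / 0 = 0`, `Real.log 0 = 0` and `0 * y = 0` implement the
conventions `0/0 = 0` and `0 · log 0 = 0`.) -/
def poissonEntropy (nu lam : ℝ) : ℝ := nu * Real.log (nu / lam) - nu + lam

/-- A star network: a finite set `S` of channels with capacities `C i > 0`, and a set `R`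
of routes, each route `r` being an unordered pair of distinct channels
`{fst r, snd r}`, with arrival rates `lam r > 0` and service parameters `mu r > 0`. -/
structure StarNetwork (S R : Type*) where
  /-- one endpoint of a route -/
  fst : R → S
  /-- the other endpoint of a route -/
  snd : R → S
  fst_ne_snd : ∀ r, fst r ≠ snd r
  /-- the capacity of each channel -/
  C : S → ℝ
  C_pos : ∀ i, 0 < C i
  /-- the arrival rate on each route -/
  lam : R → ℝ
  lam_pos : ∀ r, 0 < lam r
  /-- the service parameter of each route -/
  mu : R → ℝ
  mu_pos : ∀ r, 0 < mu r

namespace StarNetwork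

variable {S R : Type*} [Fintype S] [Fintype R]

/-- `N.touches i r` means that channel `i` is one of the two endpoints of route `r`. -/
def touches (N : StarNetwork S R) (i : S) (r : R) : Prop :=
  N.fst r = i ∨ N.snd r = i

/-- The load `x_i = ∑_{j : ij ∈ R} x_ij` of channel `i`. -/
def load (N : StarNetwork S R) (x : R → ℝ) (i : S) : ℝ :=
  ∑ r : R, if N.touches i r then x r else 0

/-- The service rate `μ_ij(x) = μ_ij · x_ij · min (C_i / x_i) (C_j / x_j)` if `x_ij > 0`,
and `μ_ij(x) = 0` if `x_ij = 0`. -/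
def srv (N : StarNetwork S R) (x : R → ℝ) (r : R) : ℝ :=
  if 0 < x r then
    N.mu r * x r *
      min (N.C (N.fst r) / N.load x (N.fst r)) (N.C (N.snd r) / N.load x (N.snd r))
  else 0

/-- The face `Λ(x) = {ij ∈ R : x_ij > 0}` of saturated routes. -/
def face (N : StarNetwork S R) (x : R → ℝ) : Set R := {r | 0 < x r}

/-- The jammed routes `Λ₁(x)`: routes `ij` with `x_ij = 0` such that some route of
`Λ(x)` contains `i` or contains `j`. -/
def jammed (N : StarNetwork S R) (x : R → ℝ) : Set R :=
  {r | x r = 0 ∧ ∃ r' ∈ N.face x, N.touches (N.fst r) r' ∨ N.touches (N.snd r) r'}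

/-- The ergodic routes `Λ₂(x) = R \ (Λ(x) ∪ Λ₁(x))`. -/
def ergodicRoutes (N : StarNetwork S R) (x : R → ℝ) : Set R :=
  (N.face x ∪ N.jammed x)ᶜ

/-- The local rate function `L(x, D) = ∑_{ij ∈ Λ(x) ∪ Λ₁(x)} l(D_ij ‖ λ_ij, μ_ij(x))`
(its finite part; `L(x,D) = +∞` when `D_ij < 0` for some `ij ∉ Λ(x)`). -/
def locRate (N : StarNetwork S R) (x D : R → ℝ) : ℝ :=
  ∑ r : R, if r ∈ N.face x ∪ N.jammed x then mmCost (D r) (N.lam r) (N.srv x r) else 0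

/-- The sample path rate function `I_T(φ) = ∫₀ᵀ L(φ(t), φ̇(t)) dt ∈ [0,∞]` if `φ` is
absolutely continuous on `[0,T]`, and `I_T(φ) = +∞` otherwise (the infimum over an
empty family is `⊤`; any two densities of `φ` coincide a.e. on `[0,T]`, so the
infimum is the common value of the integral). -/
def pathRate (N : StarNetwork S R) (T : ℝ) (φ : ℝ → R → ℝ) : ℝ≥0∞ :=
  ⨅ (f : ℝ → R → ℝ) (_ : IntegrableOn f (Set.Icc 0 T))
    (_ : ∀ t ∈ Set.Icc (0 : ℝ) T, φ t = φ 0 + ∫ s in (0 : ℝ)..t, f s),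
    ∫⁻ t in Set.Ioc (0 : ℝ) T, ENNReal.ofReal (N.locRate (φ t) (f t))

end StarNetwork


namespace StarNetworkAux

lemma max0_log_mono {a b : ℝ} (ha : 0 ≤ a) (hab : a ≤ b) :
    max 0 (Real.log a) ≤ max 0 (Real.log b) := by
  rcases eq_or_lt_of_le ha with h | h
  · simp [← h]
  · exact max_le_max le_rfl (Real.log_le_log h hab)

lemma mul_log_lb {t T : ℝ} (ht : 0 ≤ t) (hT : 0 < T) :
    t * Real.log T - T ≤ t * Real.log t := by
  rcases eq_or_lt_of_le ht with h | h
  · rw [← h]; simp; linarith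
  · have h1 : 1 - T / t ≤ Real.log (t / T) := by
      have h2 := Real.log_le_sub_one_of_pos (inv_pos.2 (div_pos h hT))
      rw [Real.log_inv] at h2
      rw [inv_div] at h2
      linarith
    have h2 : Real.log (t / T) = Real.log t - Real.log T := Real.log_div h.ne' hT.ne'
    have h3 : t * (1 - T / t) ≤ t * (Real.log t - Real.log T) := by
      rw [← h2]; exact mul_le_mul_of_nonneg_left h1 ht
    have h4 : t * (1 - T / t) = t - T := by field_simp
    nlinarith

lemma mmCost_lb {D lam mu : ℝ} (hl : 0 < lam) (hm : 0 ≤ mu)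
    (h : 0 ≤ D ∨ 0 < mu) :
    |D| * Real.log |D| - (1 + max 0 (Real.log lam) + max 0 (Real.log mu)) * |D|
      ≤ mmCost D lam mu := by
  set s := Real.sqrt (D ^ 2 + 4 * lam * mu) with hs
  have hmm : mmCost D lam mu = D * Real.log ((D + s) / (2 * lam)) + lam + mu - s := by
    simp only [mmCost, hs]
  have hs0 : 0 ≤ s := Real.sqrt_nonneg _
  have hs2 : s ^ 2 = D ^ 2 + 4 * lam * mu := Real.sq_sqrt (by positivity)
  have hsub : s ≤ |D| + lam + mu := by
    rw [hs]
    calc Real.sqrt (D ^ 2 + 4 * lam * mu) ≤ Real.sqrt ((|D| + lam + mu) ^ 2) := by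
          apply Real.sqrt_le_sqrt
          nlinarith [sq_abs D, abs_nonneg D, sq_nonneg (lam - mu)]
      _ = |D| + lam + mu := Real.sqrt_sq (by positivity)
  have hslb : |D| ≤ s := by
    rw [hs]
    calc |D| = Real.sqrt (D ^ 2) := by rw [Real.sqrt_sq_eq_abs]
      _ ≤ _ := Real.sqrt_le_sqrt (by nlinarith)
  have ha : 0 ≤ max 0 (Real.log lam) := le_max_left _ _
  have hb : 0 ≤ max 0 (Real.log mu) := le_max_left _ _
  rw [hmm]
  rcases le_or_gt 0 D with hD | hD
  · have habs : |D| = D := abs_of_nonneg hD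
    rw [habs] at hsub hslb ⊢
    have hterm : D * Real.log D - max 0 (Real.log lam) * D
        ≤ D * Real.log ((D + s) / (2 * lam)) := by
      rcases eq_or_lt_of_le hD with h0 | h0
      · rw [← h0]; simp
      · have e1 : Real.log (D / lam) ≤ Real.log ((D + s) / (2 * lam)) := by
          apply Real.log_le_log (div_pos h0 hl)
          rw [div_le_div_iff₀ hl (by positivity)]
          nlinarith
        have e2 : Real.log (D / lam) = Real.log D - Real.log lam :=
          Real.log_div h0.ne' hl.ne'
        have e3 : D * Real.log (D / lam) ≤ D * Real.log ((D + s) / (2 * lam)) :=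
          mul_le_mul_of_nonneg_left e1 hD
        have e4 : Real.log lam ≤ max 0 (Real.log lam) := le_max_right _ _
        nlinarith
    nlinarith [mul_nonneg hb hD]
  · have hmu : 0 < mu := h.resolve_left (not_le.2 hD)
    have habs : |D| = -D := abs_of_neg hD
    rw [habs] at hsub hslb ⊢
    have hDs : 0 < D + s := by nlinarith [mul_pos hl hmu]
    have hkey : (D + s) * (-D) ≤ 2 * lam * mu := by nlinarith [sq_nonneg (s + D)]
    have harg_le : (D + s) / (2 * lam) ≤ mu / (-D) := by
      rw [div_le_div_iff₀ (by positivity) (by linarith : (0:ℝ) < -D)]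
      nlinarith
    have hlog : Real.log ((D + s) / (2 * lam)) ≤ Real.log (mu / (-D)) :=
      Real.log_le_log (div_pos hDs (by positivity)) harg_le
    have hlog2 : Real.log (mu / (-D)) = Real.log mu - Real.log (-D) :=
      Real.log_div hmu.ne' (neg_ne_zero.2 hD.ne)
    have h1 : D * Real.log (mu / (-D)) ≤ D * Real.log ((D + s) / (2 * lam)) :=
      mul_le_mul_of_nonpos_left hlog hD.le
    have e1 : D * Real.log (mu / (-D))
        = (-D) * Real.log (-D) - (-D) * Real.log mu := by rw [hlog2]; ring
    have e2 : (-D) * Real.log mu ≤ (-D) * max 0 (Real.log mu) :=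
      mul_le_mul_of_nonneg_left (le_max_right _ _) (by linarith)
    have e3 : 0 ≤ max 0 (Real.log lam) * (-D) := mul_nonneg ha (by linarith)
    nlinarith

end StarNetworkAux

namespace StarNetwork
variable {S R : Type*} [Fintype S] [Fintype R]

lemma le_load (N : StarNetwork S R) {x : R → ℝ} (hx : ∀ r, 0 ≤ x r) {i : S} {r : R}
    (hr : N.touches i r) : x r ≤ N.load x i := by
  unfold load
  have h := Finset.single_le_sum (f := fun r' => if N.touches i r' then x r' else 0)
    (fun r' _ => by by_cases h : N.touches i r' <;> simp [h, hx r']) (Finset.mem_univ r)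
  simpa [hr] using h

lemma srv_pos (N : StarNetwork S R) {x : R → ℝ} (hx : ∀ r, 0 ≤ x r) {r : R}
    (hr : 0 < x r) : 0 < N.srv x r := by
  have h1 : 0 < N.load x (N.fst r) := lt_of_lt_of_le hr (N.le_load hx (Or.inl rfl))
  have h2 : 0 < N.load x (N.snd r) := lt_of_lt_of_le hr (N.le_load hx (Or.inr rfl))
  unfold srv
  rw [if_pos hr]
  exact mul_pos (mul_pos (N.mu_pos r) hr)
    (lt_min (div_pos (N.C_pos _) h1) (div_pos (N.C_pos _) h2))

lemma srv_nonneg (N : StarNetwork S R) {x : R → ℝ} (hx : ∀ r, 0 ≤ x r) (r : R) :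
    0 ≤ N.srv x r := by
  rcases lt_or_ge 0 (x r) with h | h
  · exact (N.srv_pos hx h).le
  · unfold srv; rw [if_neg (not_lt.2 h)]

lemma srv_le (N : StarNetwork S R) {x : R → ℝ} (hx : ∀ r, 0 ≤ x r) (r : R) :
    N.srv x r ≤ N.mu r * N.C (N.fst r) := by
  have hC := N.C_pos (N.fst r)
  have hmu := N.mu_pos r
  unfold srv
  split_ifs with h
  · have hload : 0 < N.load x (N.fst r) := lt_of_lt_of_le h (N.le_load hx (Or.inl rfl))
    have h1 : min (N.C (N.fst r) / N.load x (N.fst r)) (N.C (N.snd r) / N.load x (N.snd r))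
        ≤ N.C (N.fst r) / N.load x (N.fst r) := min_le_left _ _
    have h2 : x r * (N.C (N.fst r) / N.load x (N.fst r)) ≤ N.C (N.fst r) := by
      rw [div_eq_mul_inv]
      have hle : x r ≤ N.load x (N.fst r) := N.le_load hx (Or.inl rfl)
      have : x r * (N.load x (N.fst r))⁻¹ ≤ 1 := by
        rw [← div_eq_mul_inv, div_le_one hload]; exact hle
      nlinarith
    calc N.mu r * x r * min _ _ ≤ N.mu r * x r
            * (N.C (N.fst r) / N.load x (N.fst r)) := by
          apply mul_le_mul_of_nonneg_left h1 (by positivity)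
      _ = N.mu r * (x r * (N.C (N.fst r) / N.load x (N.fst r))) := by ring
      _ ≤ N.mu r * N.C (N.fst r) := mul_le_mul_of_nonneg_left h2 hmu.le
  · positivity

end StarNetwork

/-- There exists `M ∈ ℝ` such that for every `x ∈ ℝ₊^R` and every `D ∈ ℝ^R` with
`D_ij = 0` for all `ij ∈ Λ₂(x)`, `D_ij ≥ 0` for all `ij ∈ Λ₁(x)`, and `‖D‖ ≥ M`, one has
`L(x,D) ≥ ½‖D‖·log‖D‖`, where `‖D‖ = ∑_{ij ∈ R} |D_ij|`. -/
theorem locRate_superlinear {S R : Type*} [Fintype S] [Fintype R]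
    (N : StarNetwork S R) :
    ∃ M : ℝ, ∀ x D : R → ℝ, (∀ r, 0 ≤ x r) →
      (∀ r ∈ N.ergodicRoutes x, D r = 0) → (∀ r ∈ N.jammed x, 0 ≤ D r) →
      M ≤ ∑ r : R, |D r| →
      (∑ r : R, |D r|) / 2 * Real.log (∑ r : R, |D r|) ≤ N.locRate x D := by
  classical
  set n : ℝ := (Fintype.card R : ℝ) with hn
  set A : ℝ := 1 + (∑ r : R, max 0 (Real.log (N.lam r)))
      + ∑ r : R, max 0 (Real.log (N.mu r * N.C (N.fst r))) with hA
  have hA0 : 0 ≤ A := by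
    have h1 : 0 ≤ ∑ r : R, max 0 (Real.log (N.lam r)) :=
      Finset.sum_nonneg fun r _ => le_max_left _ _
    have h2 : 0 ≤ ∑ r : R, max 0 (Real.log (N.mu r * N.C (N.fst r))) :=
      Finset.sum_nonneg fun r _ => le_max_left _ _
    simp only [hA]; linarith
  refine ⟨max 1 (Real.exp (2 * (n + A))), fun x D hx hD2 hD1 hM => ?_⟩
  set T := ∑ r : R, |D r| with hT
  have hT1 : 1 ≤ T := le_trans (le_max_left _ _) hM
  have hT0 : 0 < T := by linarith
  have hlogT : 2 * (n + A) ≤ Real.log T := by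
    have h := Real.log_le_log (Real.exp_pos _) (le_trans (le_max_right _ _) hM)
    rwa [Real.log_exp] at h
  set c : R → ℝ := fun r => 1 + max 0 (Real.log (N.lam r))
      + max 0 (Real.log (N.mu r * N.C (N.fst r))) with hc
  have hpt : ∀ r : R, |D r| * Real.log |D r| - c r * |D r|
      ≤ (if r ∈ N.face x ∪ N.jammed x then mmCost (D r) (N.lam r) (N.srv x r) else 0) := by
    intro r
    by_cases hr : r ∈ N.face x ∪ N.jammed x
    · rw [if_pos hr]
      have hdis : 0 ≤ D r ∨ 0 < N.srv x r := by
        rcases hr with hf | hj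
        · exact Or.inr (N.srv_pos hx hf)
        · exact Or.inl (hD1 r hj)
      have hlb := StarNetworkAux.mmCost_lb (N.lam_pos r) (N.srv_nonneg hx r) hdis
      refine le_trans ?_ hlb
      have hmono : max 0 (Real.log (N.srv x r)) ≤ max 0 (Real.log (N.mu r * N.C (N.fst r))) :=
        StarNetworkAux.max0_log_mono (N.srv_nonneg hx r) (N.srv_le hx r)
      have habs : (0:ℝ) ≤ |D r| := abs_nonneg _
      simp only [hc]
      nlinarith
    · rw [if_neg hr]
      have hD0 : D r = 0 := hD2 r hr
      simp [hD0]
  have hsum1 : ∑ r : R, (|D r| * Real.log |D r| - c r * |D r|) ≤ N.locRate x D :=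
    Finset.sum_le_sum fun r _ => hpt r
  have hcA : ∀ r : R, c r ≤ A := by
    intro r
    have h1 : max 0 (Real.log (N.lam r)) ≤ ∑ r' : R, max 0 (Real.log (N.lam r')) :=
      Finset.single_le_sum (f := fun r' => max 0 (Real.log (N.lam r')))
        (fun r' _ => le_max_left _ _) (Finset.mem_univ r)
    have h2 : max 0 (Real.log (N.mu r * N.C (N.fst r)))
        ≤ ∑ r' : R, max 0 (Real.log (N.mu r' * N.C (N.fst r'))) :=
      Finset.single_le_sum (f := fun r' => max 0 (Real.log (N.mu r' * N.C (N.fst r'))))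
        (fun r' _ => le_max_left _ _) (Finset.mem_univ r)
    simp only [hc, hA]; linarith
  have hsum2 : ∑ r : R, c r * |D r| ≤ A * T := by
    rw [hT, Finset.mul_sum]
    exact Finset.sum_le_sum fun r _ => mul_le_mul_of_nonneg_right (hcA r) (abs_nonneg _)
  have hsum3 : T * Real.log T - n * T ≤ ∑ r : R, |D r| * Real.log |D r| := by
    have h1 : ∀ r : R, |D r| * Real.log T - T ≤ |D r| * Real.log |D r| :=
      fun r => StarNetworkAux.mul_log_lb (abs_nonneg _) hT0
    have h2 : ∑ r : R, (|D r| * Real.log T - T) = T * Real.log T - n * T := by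
      rw [Finset.sum_sub_distrib, ← Finset.sum_mul, ← hT, Finset.sum_const, hn]
      simp [nsmul_eq_mul]
    calc T * Real.log T - n * T = ∑ r : R, (|D r| * Real.log T - T) := h2.symm
      _ ≤ _ := Finset.sum_le_sum fun r _ => h1 r
  have hsplit : ∑ r : R, (|D r| * Real.log |D r| - c r * |D r|)
      = (∑ r : R, |D r| * Real.log |D r|) - ∑ r : R, c r * |D r| :=
    Finset.sum_sub_distrib _ _
  have hloc : T * Real.log T - n * T - A * T ≤ N.locRate x D := by
    rw [hsplit] at hsum1; linarith
  have hfin : T / 2 * Real.log T ≤ T * Real.log T - n * T - A * T := by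
    nlinarith [mul_nonneg hT0.le (sub_nonneg.2 hlogT)]
  exact hfin.trans hloc
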